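/- arXiv:1203.2140 — 3 statements merged into one kernel-verified Lean document; each statement's English description precedes it below -/
import Mathlib

section
/- Let g be a nondegenerate symmetric bilinear form on a 4-dimensional real vector space V. Then the map h ↦ h∘g (Kulkarni–Nomizu product with g) is injective on symmetric bilinear forms: if h₁ and h₂ are symmetric bilinear forms on V with h₁∘g = h₂∘g, then h₁ = h₂. -/
/-- The Kulkarni–Nomizu product of two bilinear forms `h` and `k`:
`(h∘k)(x,y,z,w) = h(x,z)k(y,w) − h(x,w)k(y,z) + h(y,w)k(x,z) − h(y,z)k(x,w)`. -/
def kulkarniNomizu {V : Type*} [AddCommGroup V] [Module ℝ V]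
    (h k : V →ₗ[ℝ] V →ₗ[ℝ] ℝ) (x y z w : V) : ℝ :=
  h x z * k y w - h x w * k y z + h y w * k x z - h y z * k x w

/-- For a nondegenerate symmetric bilinear form `g` on a 4-dimensional real
vector space, the map `h ↦ h∘g` is injective on symmetric bilinear forms. -/
theorem kulkarniNomizu_with_metric_injective {V : Type*} [AddCommGroup V] [Module ℝ V]
    [FiniteDimensional ℝ V] (hdim : Module.finrank ℝ V = 4)
    (g h₁ h₂ : V →ₗ[ℝ] V →ₗ[ℝ] ℝ)
    (hgsymm : ∀ x y, g x y = g y x)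
    (hgnd : ∀ x : V, (∀ y : V, g x y = 0) → x = 0)
    (h₁symm : ∀ x y, h₁ x y = h₁ y x) (h₂symm : ∀ x y, h₂ x y = h₂ y x)
    (heq : ∀ x y z w : V, kulkarniNomizu h₁ g x y z w = kulkarniNomizu h₂ g x y z w) :
    h₁ = h₂ := by
  set k : V →ₗ[ℝ] V →ₗ[ℝ] ℝ := h₁ - h₂ with hk
  -- the Kulkarni–Nomizu product of k with g vanishes
  have hk0 : ∀ x y z w : V,
      k x z * g y w - k x w * g y z + g x z * k y w - k y z * g x w = 0 := by
    intro x y z w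
    have h := heq x y z w
    simp only [kulkarniNomizu] at h
    simp only [hk, LinearMap.sub_apply]
    ring_nf
    ring_nf at h
    linarith
  have hknd : LinearMap.BilinForm.Nondegenerate g :=
    ⟨hgnd, fun y hy => hgnd y (fun x => by rw [hgsymm]; exact hy x)⟩
  let b : Module.Basis (Fin (Module.finrank ℝ V)) ℝ V := Module.finBasis ℝ V
  let e : Module.Basis (Fin (Module.finrank ℝ V)) ℝ V :=
    LinearMap.BilinForm.dualBasis g hknd b
  -- e is the g-dual basis: g (e i) (b j) = δᵢⱼ
  have hdual : ∀ i j, g (e i) (b j) = if j = i then 1 else 0 := fun i j =>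
    LinearMap.BilinForm.apply_dualBasis_left (B := g) hknd b i j
  -- expansion in the b basis: g (e i) z = b.repr z i
  have hgez : ∀ (z : V) (i), g (e i) z = b.repr z i := by
    intro z i
    conv_lhs => rw [← b.sum_repr z]
    simp [hdual, Finset.mul_sum, -Module.Basis.sum_repr]
  -- expansion in the e basis: e.repr x i = g x (b i)
  have herepr : ∀ (x : V) (i), e.repr x i = g x (b i) := fun x i =>
    LinearMap.BilinForm.dualBasis_repr_apply (B := g) hknd b x i
  -- first contraction identities
  have sumA : ∀ x z : V, ∑ i, g (e i) z * k x (b i) = k x z := by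
    intro x z
    conv_rhs => rw [← b.sum_repr z]
    simp [hgez, map_sum, mul_comm, -Module.Basis.sum_repr]
  have sumB : ∀ x z : V, ∑ i, g x (b i) * k (e i) z = k x z := by
    intro x z
    conv_rhs => rw [← e.sum_repr x]
    rw [map_sum]
    simp [herepr, mul_comm]
  have sumG : ∑ i, g (e i) (b i) = (4 : ℝ) := by
    simp only [hdual]
    simp [hdim]
  set T : ℝ := ∑ i, k (e i) (b i) with hT
  -- contract the vanishing KN product over (y,w) = (e i, b i)
  have key : ∀ x z : V, 2 * k x z + g x z * T = 0 := by
    intro x z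
    have hsum : ∑ i, (k x z * g (e i) (b i) - k x (b i) * g (e i) z
        + g x z * k (e i) (b i) - k (e i) z * g x (b i)) = 0 := by
      simp [hk0]
    rw [show ∀ f₁ f₂ f₃ f₄ : Fin (Module.finrank ℝ V) → ℝ,
        (∑ i, (f₁ i - f₂ i + f₃ i - f₄ i))
          = (∑ i, f₁ i) - (∑ i, f₂ i) + (∑ i, f₃ i) - (∑ i, f₄ i) from by
        intro f₁ f₂ f₃ f₄; simp [Finset.sum_sub_distrib, Finset.sum_add_distrib]]
        at hsum
    rw [← Finset.mul_sum, sumG] at hsum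
    have e2 : ∑ i, k x (b i) * g (e i) z = k x z := by
      rw [← sumA x z]; exact Finset.sum_congr rfl fun i _ => mul_comm _ _
    have e3 : ∑ i, g x z * k (e i) (b i) = g x z * T := by rw [← Finset.mul_sum]
    have e4 : ∑ i, k (e i) z * g x (b i) = k x z := by
      rw [← sumB x z]; exact Finset.sum_congr rfl fun i _ => mul_comm _ _
    rw [e2, e3, e4] at hsum
    linarith
  -- contract once more to get T = 0
  have hT0 : T = 0 := by
    have hsum : ∑ i, (2 * k (e i) (b i) + g (e i) (b i) * T) = 0 := by
      simp [key]
    rw [Finset.sum_add_distrib, ← Finset.mul_sum, ← hT, ← Finset.sum_mul, sumG] at hsum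
    linarith
  have hkz : k = 0 := by
    ext x z
    have := key x z
    rw [hT0] at this
    simpa using by linarith
  have hsub : h₁ - h₂ = 0 := hkz
  exact sub_eq_zero.mp hsub
end

section
/- Let g be a nondegenerate symmetric bilinear form on a 4-dimensional real vector space V, let G and T be symmetric bilinear forms on V, and let Λ, κ be real numbers. Then the expanded Einstein equation (G∘g) + Λ(g∘g) = κ(T∘g) holds (as an equality of 4-linear forms on V) if and only if the Einstein equation G + Λg = κT holds (as an equality of bilinear forms on V). -/
/-- For a nondegenerate symmetric bilinear form `g` on a 4-dimensional real
vector space, symmetric bilinear forms `G`, `T`, and reals `Λ`, `κ`, the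
expanded Einstein equation `(G∘g) + Λ(g∘g) = κ(T∘g)` holds if and only if the
Einstein equation `G + Λg = κT` holds. -/
theorem expanded_einstein_iff_einstein {V : Type*} [AddCommGroup V] [Module ℝ V]
    [FiniteDimensional ℝ V] (hdim : Module.finrank ℝ V = 4)
    (g G T : V →ₗ[ℝ] V →ₗ[ℝ] ℝ) (Λ κ : ℝ)
    (hgsymm : ∀ x y, g x y = g y x)
    (hgnd : ∀ x : V, (∀ y : V, g x y = 0) → x = 0)
    (hGsymm : ∀ x y, G x y = G y x) (hTsymm : ∀ x y, T x y = T y x) :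
    (∀ x y z w : V,
        kulkarniNomizu G g x y z w + Λ * kulkarniNomizu g g x y z w
          = κ * kulkarniNomizu T g x y z w)
      ↔ (∀ x y : V, G x y + Λ * g x y = κ * T x y) := by
  set B : V →ₗ[ℝ] V →ₗ[ℝ] ℝ := G + Λ • g - κ • T with hBdef
  have hBapp : ∀ x y, B x y = G x y + Λ * g x y - κ * T x y := by
    intro x y; simp [hBdef]
  constructor
  · intro h
    have hK : ∀ x y z w : V,
        B x z * g y w - B x w * g y z + B y w * g x z - B y z * g x w = 0 := by
      intro x y z w
      have := h x y z w
      simp only [hBapp, kulkarniNomizu] at this ⊢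
      linarith [this]
    have hsymm : g.IsSymm := ⟨fun x y => hgsymm x y⟩
    obtain ⟨v, hv⟩ := LinearMap.BilinForm.exists_orthogonal_basis hsymm
    rw [LinearMap.isOrthoᵢ_def] at hv
    have hvnz : ∀ i, g (v i) (v i) ≠ 0 := by
      intro i h0
      have hz : g (v i) = 0 := by
        apply Module.Basis.ext v
        intro j
        rcases eq_or_ne i j with rfl | hij
        · simpa using h0
        · simpa using hv i j hij
      exact v.ne_zero i (hgnd _ (by simp [hz]))
    -- contraction identity
    have key : ∀ (f : V →ₗ[ℝ] ℝ) (x : V),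
        ∑ i, (g (v i) (v i))⁻¹ * g (v i) x * f (v i) = f x := by
      intro f x
      have hF : (∑ i, ((g (v i) (v i))⁻¹ * f (v i)) • (g (v i)) : V →ₗ[ℝ] ℝ) = f := by
        apply Module.Basis.ext v
        intro j
        simp only [LinearMap.coe_sum, Finset.sum_apply, LinearMap.smul_apply,
          smul_eq_mul]
        rw [Finset.sum_eq_single j]
        · field_simp
          rw [mul_div_cancel_left₀ _ (hvnz j)]
        · intro i _ hij
          simp [hv i j hij]
        · simp
      calc ∑ i, (g (v i) (v i))⁻¹ * g (v i) x * f (v i)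
          = ∑ i, (((g (v i) (v i))⁻¹ * f (v i)) • (g (v i))) x := by
            apply Finset.sum_congr rfl; intro i _; simp; ring
        _ = (∑ i, ((g (v i) (v i))⁻¹ * f (v i)) • (g (v i)) : V →ₗ[ℝ] ℝ) x := by
            simp
        _ = f x := by rw [hF]
    set t : ℝ := ∑ i, (g (v i) (v i))⁻¹ * B (v i) (v i) with ht
    have main : ∀ x z : V, 2 * B x z + t * g x z = 0 := by
      intro x z
      have e0 : ∑ i, (g (v i) (v i))⁻¹ *
          (B x z * g (v i) (v i) - B x (v i) * g (v i) z
            + B (v i) (v i) * g x z - B (v i) z * g (v i) x) = 0 := by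
        apply Finset.sum_eq_zero
        intro i _
        have hk := hK x (v i) z (v i)
        rw [hgsymm x (v i)] at hk
        rw [hk, mul_zero]
      have hA : ∑ i, (g (v i) (v i))⁻¹ * (B x z * g (v i) (v i)) = 4 * B x z := by
        rw [Finset.sum_congr rfl (fun i _ => by
          rw [mul_comm, mul_assoc, mul_inv_cancel₀ (hvnz i), mul_one])]
        rw [Finset.sum_const, Finset.card_univ, Fintype.card_fin, hdim,
          nsmul_eq_mul]
        norm_num
      have hBt : ∑ i, (g (v i) (v i))⁻¹ * (B x (v i) * g (v i) z) = B x z := by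
        rw [Finset.sum_congr rfl (fun i _ => by ring_nf :
          ∀ i ∈ Finset.univ, (g (v i) (v i))⁻¹ * (B x (v i) * g (v i) z)
            = (g (v i) (v i))⁻¹ * g (v i) z * (B x) (v i))]
        exact key (B x) z
      have hC : ∑ i, (g (v i) (v i))⁻¹ * (B (v i) (v i) * g x z) = t * g x z := by
        rw [ht, Finset.sum_mul]
        apply Finset.sum_congr rfl; intro i _; ring
      have hD : ∑ i, (g (v i) (v i))⁻¹ * (B (v i) z * g (v i) x) = B x z := by
        have := key (B.flip z) x
        simp only [LinearMap.flip_apply] at this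
        rw [Finset.sum_congr rfl (fun i _ => by ring_nf :
          ∀ i ∈ Finset.univ, (g (v i) (v i))⁻¹ * (B (v i) z * g (v i) x)
            = (g (v i) (v i))⁻¹ * g (v i) x * B (v i) z)]
        exact this
      simp only [mul_sub, mul_add] at e0
      rw [Finset.sum_sub_distrib, Finset.sum_add_distrib, Finset.sum_sub_distrib,
        hA, hBt, hC, hD] at e0
      linarith
    have ht0 : t = 0 := by
      have hconst : ∀ i : Fin (Module.finrank ℝ V), (g (v i) (v i))⁻¹ * B (v i) (v i)
            = -(t/2) := by
          intro i
          have hm := main (v i) (v i)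
          have : B (v i) (v i) = -(t/2) * g (v i) (v i) := by linarith
          rw [this, mul_comm ((g (v i) (v i))⁻¹), mul_assoc,
            mul_inv_cancel₀ (hvnz i), mul_one]
      have hteq : ∑ i, (g (v i) (v i))⁻¹ * B (v i) (v i) = -2 * t := by
        rw [Finset.sum_congr rfl (fun i _ => hconst i), Finset.sum_const,
          Finset.card_univ, Fintype.card_fin, hdim, nsmul_eq_mul]
        push_cast
        ring
      have := ht.trans hteq
      linarith
    intro x y
    have := main x y
    rw [ht0] at this
    have hb : B x y = 0 := by linarith
    rw [hBapp] at hb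
    linarith
  · intro h x y z w
    have hG : ∀ x y : V, G x y = κ * T x y - Λ * g x y := by
      intro x y; linarith [h x y]
    simp only [kulkarniNomizu, hG]
    ring
end

section
/- Let m, τ, ξ be real numbers with τ ≠ 0 and τ² ≠ 2m. Then for all vectors u = (u₁,u₂) and v = (v₁,v₂) in ℝ², writing a = (4ξτ³u₁ + τ⁴u₂, 2τu₁) and b = (4ξτ³v₁ + τ⁴v₂, 2τv₁) for the images of u and v under the differential of the map (τ,ξ) ↦ (t,r) = (ξτ⁴, τ²), one has −(1 − 2m/τ²)·a₁b₁ + (1 − 2m/τ²)⁻¹·a₂b₂ = −(4τ⁴/(2m − τ²))·u₁v₁ + (2m − τ²)τ⁴·(4ξu₁ + τu₂)(4ξv₁ + τv₂). That is, the pullback of the (t,r)-block of the Schwarzschild metric −(1−2m/r)dt² + (1−2m/r)⁻¹dr² under the substitution r = τ², t = ξτ⁴ equals −(4τ⁴/(2m−τ²))dτ² + (2m−τ²)τ⁴(4ξdτ + τdξ)². -/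
/-- Pullback of the `(t,r)`-block of the Schwarzschild metric
`−(1−2m/r)dt² + (1−2m/r)⁻¹dr²` under the substitution `r = τ²`, `t = ξτ⁴`:
with `a = (4ξτ³u₁ + τ⁴u₂, 2τu₁)` and `b = (4ξτ³v₁ + τ⁴v₂, 2τv₁)` the images of
`u`, `v` under the differential, one gets
`−(4τ⁴/(2m−τ²))u₁v₁ + (2m−τ²)τ⁴(4ξu₁ + τu₂)(4ξv₁ + τv₂)`. -/
theorem schwarzschild_metric_pullback (m τ ξ : ℝ) (hτ : τ ≠ 0) (hm : τ ^ 2 ≠ 2 * m) :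
    ∀ u₁ u₂ v₁ v₂ : ℝ,
      -(1 - 2 * m / τ ^ 2) * (4 * ξ * τ ^ 3 * u₁ + τ ^ 4 * u₂)
            * (4 * ξ * τ ^ 3 * v₁ + τ ^ 4 * v₂)
        + (1 - 2 * m / τ ^ 2)⁻¹ * (2 * τ * u₁) * (2 * τ * v₁)
      = -(4 * τ ^ 4 / (2 * m - τ ^ 2)) * u₁ * v₁
        + (2 * m - τ ^ 2) * τ ^ 4 * (4 * ξ * u₁ + τ * u₂) * (4 * ξ * v₁ + τ * v₂) := by
  intro u₁ u₂ v₁ v₂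
  have h1 : (1 : ℝ) - 2 * m / τ ^ 2 = (τ ^ 2 - 2 * m) / τ ^ 2 := by
    field_simp
  have h2 : τ ^ 2 - 2 * m ≠ 0 := sub_ne_zero.mpr hm
  have h3 : 2 * m - τ ^ 2 ≠ 0 := fun h => hm (by linarith)
  rw [h1]
  field_simp
  ring
end
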